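/- Let G be a countable discrete group and f an n×n matrix over ℤ[G] admitting an ℓ² formal inverse ξ. Then for α ∈ ℤ[G]^{⊕n}, the following are equivalent: (1) there exists β ∈ ℤ[G]^{⊕n} with α = r(f)β; (2) every value of r(ξ)α is an integer, i.e. (r(ξ)α)(l)(g) ∈ ℤ for all 1 ≤ l ≤ n and g ∈ G. Moreover, in case (1), r(ξ)α equals β regarded as an element of ℓ²(G)^{⊕n}. -/

import Mathlib

open scoped Classical ENNReal

noncomputable section

/-- Convolution of a finitely supported `a : ℂ[G]` with `ξ : G → ℂ`:
`(a*ξ)(g) = ∑_{h} a(h) ξ(h⁻¹g)`. -/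
def fconv {G : Type*} [Group G] (a : G →₀ ℂ) (ξ : G → ℂ) : G → ℂ :=
  fun g => a.sum fun h c => c * ξ (h⁻¹ * g)

/-- Convolution of `ξ : G → ℂ` with a finitely supported `a : ℂ[G]`. -/
def fconvR {G : Type*} [Group G] (ξ : G → ℂ) (a : G →₀ ℂ) : G → ℂ :=
  fun g => a.sum fun h c => ξ (g * h⁻¹) * c

/-- The matrix `1̂` with diagonal entries `δ_e` and zero off-diagonal entries. -/
def oneHat (G : Type*) [Group G] (n : ℕ) : Matrix (Fin n) (Fin n) (G → ℂ) :=
  fun i j g => if i = j ∧ g = 1 then 1 else 0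

/-- `(fξ)_{ij} = ∑_k f_{ik} * ξ_{kj}`. -/
def matConv {G : Type*} [Group G] {n : ℕ} (f : Matrix (Fin n) (Fin n) (G →₀ ℂ))
    (ξ : Matrix (Fin n) (Fin n) (G → ℂ)) : Matrix (Fin n) (Fin n) (G → ℂ) :=
  fun i j => ∑ k, fconv (f i k) (ξ k j)

/-- `(ξf)_{ij} = ∑_k ξ_{ik} * f_{kj}`. -/
def matConvR {G : Type*} [Group G] {n : ℕ} (ξ : Matrix (Fin n) (Fin n) (G → ℂ))
    (f : Matrix (Fin n) (Fin n) (G →₀ ℂ)) : Matrix (Fin n) (Fin n) (G → ℂ) :=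
  fun i j => ∑ k, fconvR (ξ i k) (f k j)

/-- A finitely supported integer-valued function regarded as an element of `ℂ[G]`. -/
def castZC {G : Type*} [Group G] (a : MonoidAlgebra ℤ G) : G →₀ ℂ :=
  Finsupp.mapRange (Int.cast : ℤ → ℂ) Int.cast_zero a.coeff

section AuxLemmas

variable {G : Type*} [Group G]

omit [Group G] in
lemma summable_sq_of_memℓp {ζ : G → ℂ} (h : Memℓp ζ 2) :
    Summable fun g => ‖ζ g‖ ^ (2:ℝ) := by
  have hp : 0 < (2 : ℝ≥0∞).toReal := by norm_num
  simpa using h.summable hp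

omit [Group G] in
lemma memℓp_of_summable_sq {ζ : G → ℂ} (h : Summable fun g => ‖ζ g‖ ^ (2:ℝ)) :
    Memℓp ζ 2 := by
  apply memℓp_gen
  simpa using h

lemma fconv_zero (ζ : G → ℂ) : fconv (0 : G →₀ ℂ) ζ = 0 := by
  funext g; simp [fconv]

lemma fconv_add (a b : G →₀ ℂ) (ζ : G → ℂ) :
    fconv (a + b) ζ = fconv a ζ + fconv b ζ := by
  funext g
  simp [fconv, Finsupp.sum_add_index, add_mul]

lemma fconv_single (x : G) (c : ℂ) (ζ : G → ℂ) (g : G) :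
    fconv (Finsupp.single x c) ζ g = c * ζ (x⁻¹ * g) := by
  simp [fconv, Finsupp.sum_single_index]

lemma fconv_finsetSum {ι : Type*} (s : Finset ι) (a : ι → G →₀ ℂ) (ζ : G → ℂ) (g : G) :
    fconv (∑ i ∈ s, a i) ζ g = ∑ i ∈ s, fconv (a i) ζ g := by
  classical
  induction s using Finset.induction with
  | empty => simp [fconv_zero]
  | insert h ih => simp_all [Finset.sum_insert, fconv_add]

lemma fconv_sum_right {ι : Type*} (a : G →₀ ℂ) (s : Finset ι) (ζ : ι → G → ℂ) (g : G) :
    fconv a (fun x => ∑ i ∈ s, ζ i x) g = ∑ i ∈ s, fconv a (ζ i) g := by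
  simp only [fconv, Finsupp.sum, Finset.mul_sum]
  exact Finset.sum_comm

lemma fconvR_zero_right (ζ : G → ℂ) : fconvR ζ (0 : G →₀ ℂ) = 0 := by
  funext g; simp [fconvR]

lemma fconvR_add_right (ζ : G → ℂ) (a b : G →₀ ℂ) :
    fconvR ζ (a + b) = fconvR ζ a + fconvR ζ b := by
  funext g; simp [fconvR, Finsupp.sum_add_index, mul_add]

lemma fconvR_single_right (ζ : G → ℂ) (y : G) (r : ℂ) (g : G) :
    fconvR ζ (Finsupp.single y r) g = ζ (g * y⁻¹) * r := by
  simp [fconvR, Finsupp.sum_single_index]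

lemma fconvR_sum_left {ι : Type*} (s : Finset ι) (ζ : ι → G → ℂ) (a : G →₀ ℂ) (g : G) :
    fconvR (fun x => ∑ i ∈ s, ζ i x) a g = ∑ i ∈ s, fconvR (ζ i) a g := by
  simp only [fconvR, Finsupp.sum, Finset.sum_mul]
  exact Finset.sum_comm

lemma fconv_assoc (a : G →₀ ℂ) (ζ : G → ℂ) (b : G →₀ ℂ) (g : G) :
    fconvR (fconv a ζ) b g = fconv a (fconvR ζ b) g := by
  simp only [fconv, fconvR, Finsupp.sum, Finset.sum_mul, Finset.mul_sum, mul_assoc]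
  exact Finset.sum_comm

lemma fconv_mul (a b : MonoidAlgebra ℂ G) (ζ : G → ℂ) :
    fconv (a * b).coeff ζ = fconv a.coeff (fconv b.coeff ζ) := by
  induction a using MonoidAlgebra.induction_linear with
  | zero => simp [fconv_zero]
  | add a₁ a₂ h1 h2 => rw [add_mul, MonoidAlgebra.coeff_add, MonoidAlgebra.coeff_add, fconv_add, fconv_add, h1, h2]
  | single x c =>
    induction b using MonoidAlgebra.induction_linear with
    | zero =>
      funext g
      simp [mul_zero, fconv_zero, fconv_single]
    | add b₁ b₂ h1 h2 =>
      funext g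
      have e1 := congrFun h1 g
      have e2 := congrFun h2 g
      rw [mul_add, MonoidAlgebra.coeff_add, fconv_add, Pi.add_apply, e1, e2, MonoidAlgebra.coeff_single, fconv_single, fconv_single, fconv_single,
        MonoidAlgebra.coeff_add, fconv_add, Pi.add_apply, mul_add]
    | single y d =>
      funext g
      have hs : MonoidAlgebra.single x c * MonoidAlgebra.single y d
          = MonoidAlgebra.single (x * y) (c * d) := MonoidAlgebra.single_mul_single ..
      simp only [hs, MonoidAlgebra.coeff_single]
      rw [fconv_single, fconv_single, fconv_single, mul_inv_rev, mul_assoc, mul_assoc]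

lemma mul_apply_eq_fconvR (b a : MonoidAlgebra ℂ G) (g : G) :
    (b * a).coeff g = fconvR (⇑b.coeff) a.coeff g := by
  induction a using MonoidAlgebra.induction_linear with
  | zero => simp [fconvR_zero_right]
  | add a₁ a₂ h1 h2 =>
    have h3 := congrFun (fconvR_add_right (⇑b.coeff) a₁.coeff a₂.coeff) g
    rw [mul_add, MonoidAlgebra.coeff_add, Finsupp.add_apply, h1, h2, MonoidAlgebra.coeff_add, h3, Pi.add_apply]
  | single y r =>
    have hs : (b * MonoidAlgebra.single y r).coeff g = b.coeff (g * y⁻¹) * r :=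
      MonoidAlgebra.coeff_mul_single_apply ..
    rw [hs, MonoidAlgebra.coeff_single, fconvR_single_right]

lemma fconv_delta (a : G →₀ ℂ) (g : G) :
    fconv a (fun x => if x = 1 then (1:ℂ) else 0) g = a g := by
  classical
  simp only [fconv, inv_mul_eq_one, mul_ite, mul_one, mul_zero]
  rw [Finsupp.sum_ite_eq' a g (fun _ c => c)]
  split
  · rfl
  · next h => exact (Finsupp.notMem_support_iff.mp h).symm

lemma castZC_apply (a : MonoidAlgebra ℤ G) (g : G) : castZC a g = ((a.coeff g : ℤ) : ℂ) := rfl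

lemma castZC_add (a b : MonoidAlgebra ℤ G) : castZC (a + b) = castZC a + castZC b := by
  ext g
  rw [Finsupp.add_apply, castZC_apply, castZC_apply, castZC_apply, MonoidAlgebra.coeff_add, Finsupp.add_apply, Int.cast_add]

lemma castZC_single (x : G) (z : ℤ) :
    castZC (MonoidAlgebra.single x z) = Finsupp.single x ((z : ℂ)) := by
  simp [castZC, MonoidAlgebra.coeff_single]

lemma castZC_mul (a b : MonoidAlgebra ℤ G) :
    castZC (a * b) = (MonoidAlgebra.ofCoeff (castZC a) * MonoidAlgebra.ofCoeff (castZC b)).coeff := by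
  induction a using MonoidAlgebra.induction_linear with
  | zero => simp [castZC, add_mul]
  | add a₁ a₂ h1 h2 => rw [add_mul, castZC_add, castZC_add, h1, h2, MonoidAlgebra.ofCoeff_add, add_mul, MonoidAlgebra.coeff_add]
  | single x c =>
    induction b using MonoidAlgebra.induction_linear with
    | zero => simp [castZC]
    | add b₁ b₂ h1 h2 => rw [mul_add, castZC_add, castZC_add, h1, h2, MonoidAlgebra.ofCoeff_add, mul_add, MonoidAlgebra.coeff_add]
    | single y d =>
      have hs : MonoidAlgebra.single x c * MonoidAlgebra.single y d
          = MonoidAlgebra.single (x * y) (c * d) := MonoidAlgebra.single_mul_single ..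
      have hs' : MonoidAlgebra.single x ((c:ℂ)) * MonoidAlgebra.single y ((d:ℂ))
          = MonoidAlgebra.single (x * y) ((c:ℂ) * (d:ℂ)) :=
        MonoidAlgebra.single_mul_single ..
      rw [hs, castZC_single, castZC_single, castZC_single, Int.cast_mul,
        MonoidAlgebra.ofCoeff_single, MonoidAlgebra.ofCoeff_single, hs', MonoidAlgebra.coeff_single]

lemma castZC_finsetSum {ι : Type*} (s : Finset ι) (a : ι → MonoidAlgebra ℤ G) :
    castZC (∑ i ∈ s, a i) = ∑ i ∈ s, castZC (a i) := by
  classical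
  induction s using Finset.induction with
  | empty => simp [castZC]
  | insert h ih => simp_all [Finset.sum_insert, castZC_add]

lemma memℓp_term (c : ℂ) (x : G) {ζ : G → ℂ} (hζ : Memℓp ζ 2) :
    Memℓp (fun g => c * ζ (x⁻¹ * g)) 2 := by
  apply memℓp_of_summable_sq
  have h1 : Summable fun g => ‖ζ g‖ ^ (2:ℝ) := summable_sq_of_memℓp hζ
  have h2 := ((Equiv.mulLeft x⁻¹).summable_iff (f := fun g => ‖ζ g‖ ^ (2:ℝ))).mpr h1
  have h3 := h2.mul_left (‖c‖ ^ (2:ℝ))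
  apply h3.congr
  intro g
  simp only [Function.comp_apply, Equiv.coe_mulLeft]
  rw [← Real.mul_rpow (norm_nonneg _) (norm_nonneg _), norm_mul]

lemma memℓp_finsetSum_term (s : Finset G) (a : G →₀ ℂ) {ζ : G → ℂ} (hζ : Memℓp ζ 2) :
    Memℓp (fun g => ∑ h ∈ s, a h * ζ (h⁻¹ * g)) 2 := by
  classical
  induction s using Finset.induction with
  | empty => simp only [Finset.sum_empty]; exact zero_memℓp
  | @insert x t hx ih =>
    have h4 := (memℓp_term (a x) x hζ).add ih
    have he : (fun g => ∑ h ∈ insert x t, a h * ζ (h⁻¹ * g))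
        = (fun g => a x * ζ (x⁻¹ * g)) + fun g => ∑ h ∈ t, a h * ζ (h⁻¹ * g) := by
      funext g
      simp [Finset.sum_insert hx]
    rw [he]
    exact h4

lemma memℓp_fconv (a : G →₀ ℂ) {ζ : G → ℂ} (hζ : Memℓp ζ 2) :
    Memℓp (fconv a ζ) 2 := by
  have hrep : fconv a ζ = fun g => ∑ h ∈ a.support, a h * ζ (h⁻¹ * g) := by
    funext g; rfl
  rw [hrep]
  exact memℓp_finsetSum_term a.support a hζ

omit [Group G] in
lemma memℓp_finsetSum' {ι : Type*} (s : Finset ι) (F : ι → G → ℂ)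
    (h : ∀ i ∈ s, Memℓp (F i) 2) :
    Memℓp (fun g => ∑ i ∈ s, F i g) 2 := by
  classical
  induction s using Finset.induction with
  | empty => simp only [Finset.sum_empty]; exact zero_memℓp
  | @insert x t hx ih =>
    have h4 := (h x (Finset.mem_insert_self x t)).add
      (ih (fun i hi => h i (Finset.mem_insert_of_mem hi)))
    have he : (fun g => ∑ i ∈ insert x t, F i g) = F x + fun g => ∑ i ∈ t, F i g := by
      funext g
      simp [Finset.sum_insert hx]
    rw [he]
    exact h4

omit [Group G] in
lemma finite_support_of_int_valued {ζ : G → ℂ} (h : Memℓp ζ 2)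
    (hint : ∀ g, ∃ z : ℤ, ζ g = (z : ℂ)) : (Function.support ζ).Finite := by
  have hs := summable_sq_of_memℓp h
  have hcof : ∀ᶠ g in Filter.cofinite, ‖ζ g‖ ^ (2:ℝ) < 1 :=
    hs.tendsto_cofinite_zero.eventually (Filter.Tendsto.eventually_lt_const (by norm_num)
      Filter.tendsto_id) |>.mono (fun g hg => hg)
  have hfin : {g | ¬ ‖ζ g‖ ^ (2:ℝ) < 1}.Finite := by
    simpa [Filter.eventually_cofinite] using hcof
  apply hfin.subset
  intro g hg
  obtain ⟨z, hz⟩ := hint g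
  have hz0 : z ≠ 0 := by
    intro h0; apply hg; simp [Function.mem_support] at hg ⊢; rw [hz, h0]; simp
  simp only [Set.mem_setOf_eq, not_lt]
  rw [hz]
  have h1 : (1:ℝ) ≤ ‖(z:ℂ)‖ := by
    rw [Complex.norm_intCast]
    exact_mod_cast Int.one_le_abs hz0
  calc (1:ℝ) = 1 ^ (2:ℝ) := by norm_num
  _ ≤ ‖(z:ℂ)‖ ^ (2:ℝ) := Real.rpow_le_rpow (by norm_num) h1 (by norm_num)

/-- Summing `fconv (castZC (a j)) (oneHat G n j l)` over `j` gives `castZC (a l)`. -/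
lemma sum_fconv_oneHat {n : ℕ} (a : Fin n → MonoidAlgebra ℤ G) (l : Fin n) (g : G) :
    ∑ j, fconv (castZC (a j)) (oneHat G n j l) g = castZC (a l) g := by
  classical
  rw [Finset.sum_eq_single l]
  · have hd : oneHat G n l l = fun x => if x = 1 then (1:ℂ) else 0 := by
      funext x; simp [oneHat]
    rw [hd, fconv_delta]
  · intro j _ hj
    have h0 : oneHat G n j l = fun _ => (0:ℂ) := by
      funext x; simp [oneHat, hj]
    rw [h0]
    simp [fconv]
  · intro h; exact absurd (Finset.mem_univ l) h

end AuxLemmas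

/-- Let `f ∈ M_n(ℤ[G])` with ℓ² formal inverse `ξ`.  Then for `α ∈ ℤ[G]^{⊕n}` the
following are equivalent: (1) `α = r(f)β` for some `β ∈ ℤ[G]^{⊕n}` (where
`(r(f)β)(l) = ∑_k β(k) * f_{kl}`, multiplication in `ℤ[G]`); (2) every value of `r(ξ)α`
is an integer.  Moreover, in case (1), `r(ξ)α = β̂`.  Here
`(r(ξ)α)(l)(g) = ∑_k ∑_h α(k)(h) ξ_{kl}(h⁻¹g)`. -/
theorem integrality_criterion {G : Type*} [Group G] [Countable G] {n : ℕ}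
    (f : Matrix (Fin n) (Fin n) (MonoidAlgebra ℤ G))
    (ξ : Matrix (Fin n) (Fin n) (lp (fun _ : G => ℂ) 2))
    (hξ : matConv (fun i j => castZC (f i j)) (fun i j => ⇑(ξ i j)) = oneHat G n ∧
          matConvR (fun i j => ⇑(ξ i j)) (fun i j => castZC (f i j)) = oneHat G n)
    (α : Fin n → MonoidAlgebra ℤ G) :
    ((∃ β : Fin n → MonoidAlgebra ℤ G, ∀ l, α l = ∑ k, β k * f k l) ↔
      (∀ (l : Fin n) (g : G), ∃ z : ℤ,
        (∑ k, fconv (castZC (α k)) (⇑(ξ k l))) g = (z : ℂ))) ∧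
    (∀ β : Fin n → MonoidAlgebra ℤ G, (∀ l, α l = ∑ k, β k * f k l) →
      ∀ (l : Fin n) (g : G),
        (∑ k, fconv (castZC (α k)) (⇑(ξ k l))) g = ((β l |>.coeff g : ℤ) : ℂ)) := by
  classical
  -- the "moreover" part
  have moreover : ∀ β : Fin n → MonoidAlgebra ℤ G, (∀ l, α l = ∑ k, β k * f k l) →
      ∀ (l : Fin n) (g : G),
        (∑ k, fconv (castZC (α k)) (⇑(ξ k l))) g = ((β l |>.coeff g : ℤ) : ℂ) := by
    intro β hβ l g
    have hone : ∀ j l : Fin n,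
        (fun x => ∑ k, fconv (castZC (f j k)) (⇑(ξ k l)) x) = oneHat G n j l := by
      intro j l
      funext x
      have := congrFun (congrFun (congrFun hξ.1 j) l) x
      simpa [matConv, Finset.sum_apply] using this
    calc (∑ k, fconv (castZC (α k)) (⇑(ξ k l))) g
        = ∑ k, fconv (castZC (α k)) (⇑(ξ k l)) g := by rw [Finset.sum_apply]
      _ = ∑ k, ∑ j, fconv (castZC (β j)) (fconv (castZC (f j k)) (⇑(ξ k l))) g := by
          refine Finset.sum_congr rfl (fun k _ => ?_)
          rw [hβ k, castZC_finsetSum, fconv_finsetSum]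
          refine Finset.sum_congr rfl (fun j _ => ?_)
          rw [castZC_mul, fconv_mul, MonoidAlgebra.coeff_ofCoeff, MonoidAlgebra.coeff_ofCoeff]
      _ = ∑ j, ∑ k, fconv (castZC (β j)) (fconv (castZC (f j k)) (⇑(ξ k l))) g :=
          Finset.sum_comm
      _ = ∑ j, fconv (castZC (β j)) (oneHat G n j l) g := by
          refine Finset.sum_congr rfl (fun j _ => ?_)
          rw [← hone j l, fconv_sum_right]
      _ = castZC (β l) g := sum_fconv_oneHat β l g
      _ = ((β l |>.coeff g : ℤ) : ℂ) := castZC_apply ..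
  refine ⟨⟨?_, ?_⟩, moreover⟩
  · rintro ⟨β, hβ⟩ l g
    exact ⟨(β l).coeff g, moreover β hβ l g⟩
  · intro hint
    -- the candidate values
    set Z : Fin n → G → ℂ := fun l g => (∑ k, fconv (castZC (α k)) (⇑(ξ k l))) g with hZ
    have hb : ∀ l g, Z l g = (((hint l g).choose : ℤ) : ℂ) := fun l g => (hint l g).choose_spec
    have hmem : ∀ l, Memℓp (Z l) 2 := by
      intro l
      have : Z l = fun g => ∑ k, fconv (castZC (α k)) (⇑(ξ k l)) g := by
        funext g; exact Finset.sum_apply _ _ _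
      rw [this]
      exact memℓp_finsetSum' Finset.univ _ (fun k _ => memℓp_fconv _ (lp.memℓp (ξ k l)))
    have hfinZ : ∀ l, (Function.support (Z l)).Finite := fun l =>
      finite_support_of_int_valued (hmem l) (fun g => ⟨(hint l g).choose, hb l g⟩)
    have hfinb : ∀ l, (Function.support (fun g => (hint l g).choose)).Finite := by
      intro l
      apply (hfinZ l).subset
      intro g hg
      simp only [Function.mem_support] at hg ⊢
      intro h0
      apply hg
      have := hb l g
      rw [h0] at this
      exact_mod_cast this.symm
    set β : Fin n → MonoidAlgebra ℤ G :=
      fun l => MonoidAlgebra.ofCoeff (Finsupp.ofSupportFinite (fun g => (hint l g).choose) (hfinb l)) with hβdef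
    have hβapp : ∀ l g, (β l).coeff g = (hint l g).choose := fun l g => rfl
    have hcast : ∀ k, ⇑(castZC (β k)) = Z k := by
      intro k
      funext g
      rw [castZC_apply, hβapp, ← hb]
    refine ⟨β, fun l => ?_⟩
    -- identity from the other inverse relation
    have hone : ∀ j l : Fin n,
        (fun x => ∑ k, fconvR (⇑(ξ j k)) (castZC (f k l)) x) = oneHat G n j l := by
      intro j l
      funext x
      have := congrFun (congrFun (congrFun hξ.2 j) l) x
      simpa [matConvR, Finset.sum_apply] using this
    ext g
    apply Int.cast_injective (α := ℂ)
    have key : (((α l).coeff g : ℤ) : ℂ) = (((∑ k, β k * f k l).coeff g : ℤ) : ℂ) := by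
      rw [← castZC_apply, ← castZC_apply]
      calc castZC (α l) g
          = ∑ j, fconv (castZC (α j)) (oneHat G n j l) g := (sum_fconv_oneHat α l g).symm
        _ = ∑ j, ∑ k, fconv (castZC (α j)) (fconvR (⇑(ξ j k)) (castZC (f k l))) g := by
            refine Finset.sum_congr rfl (fun j _ => ?_)
            rw [← hone j l, fconv_sum_right]
        _ = ∑ k, ∑ j, fconv (castZC (α j)) (fconvR (⇑(ξ j k)) (castZC (f k l))) g :=
            Finset.sum_comm
        _ = ∑ k, castZC (β k * f k l) g := by
            refine Finset.sum_congr rfl (fun k _ => ?_)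
            have h1 : ∀ j, fconv (castZC (α j)) (fconvR (⇑(ξ j k)) (castZC (f k l))) g
                = fconvR (fconv (castZC (α j)) (⇑(ξ j k))) (castZC (f k l)) g :=
              fun j => (fconv_assoc ..).symm
            have hZk : (fun x => ∑ j, fconv (castZC (α j)) (⇑(ξ j k)) x) = Z k := by
              funext x
              exact (Finset.sum_apply _ _ _).symm
            rw [Finset.sum_congr rfl (fun j _ => h1 j), ← fconvR_sum_left, hZk,
              castZC_mul, mul_apply_eq_fconvR, MonoidAlgebra.coeff_ofCoeff, MonoidAlgebra.coeff_ofCoeff, hcast]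
        _ = castZC (∑ k, β k * f k l) g := by
            rw [castZC_finsetSum]
            rw [Finsupp.finset_sum_apply]
    exact key
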